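/- arXiv:2410.21761 — 4 statements merged into one kernel-verified Lean document; each statement's English description precedes it below -/
import Mathlib

section
/- Let R = ZMod(p^ℓ) with p prime and let G = GL₂(R), B the upper triangular invertible matrices. Every element of G lies in a double coset B·g·B where g is either the matrix [[1,0],[p^j·z,1]] for some 1 ≤ j ≤ ℓ and z ∈ R, or the matrix [[0,1],[1,0]]. -/
open Matrix

lemma stmt8_dvd_of_not_isUnit (p ℓ : ℕ) (hp : p.Prime) (hℓ : 1 ≤ ℓ)
    (x : ZMod (p ^ ℓ)) (hx : ¬IsUnit x) : (p : ZMod (p ^ ℓ)) ∣ x := by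
  haveI : NeZero (p ^ ℓ) := ⟨pow_ne_zero ℓ hp.pos.ne'⟩
  have hc : ¬ x.val.Coprime (p ^ ℓ) := by
    intro h
    exact hx (by simpa [ZMod.natCast_val, ZMod.cast_id] using
      (ZMod.isUnit_iff_coprime x.val (p ^ ℓ)).mpr h)
  have hdvd : p ∣ x.val := by
    by_contra hnd
    exact hc (Nat.Coprime.pow_right ℓ (Nat.Coprime.symm (hp.coprime_iff_not_dvd.mpr hnd)))
  obtain ⟨k, hk⟩ := hdvd
  refine ⟨(k : ZMod (p ^ ℓ)), ?_⟩
  have : ((x.val : ℕ) : ZMod (p ^ ℓ)) = x := by simp [ZMod.natCast_val, ZMod.cast_id]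
  rw [← this, hk]
  push_cast
  ring

/-- Double coset decomposition of `GL₂(ZMod (p^ℓ))` by its Borel subgroup: every
element lies in `B·g·B` where `g = [[1,0],[p^j·z,1]]` for some `1 ≤ j ≤ ℓ`, `z`,
or `g = [[0,1],[1,0]]`. -/
theorem stmt_8 (p ℓ : ℕ) (hp : p.Prime) (g : GL (Fin 2) (ZMod (p ^ ℓ))) :
    ∃ b₁ b₂ : GL (Fin 2) (ZMod (p ^ ℓ)),
      b₁.val 1 0 = 0 ∧ b₂.val 1 0 = 0 ∧
      ((∃ j : ℕ, ∃ z : ZMod (p ^ ℓ), 1 ≤ j ∧ j ≤ ℓ ∧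
          g.val = b₁.val * !![1, 0; (p : ZMod (p ^ ℓ)) ^ j * z, 1] * b₂.val)
        ∨ g.val = b₁.val * !![0, 1; 1, 0] * b₂.val) := by
  rcases Nat.eq_zero_or_pos ℓ with hℓ | hℓ
  · subst hℓ
    haveI : Subsingleton (ZMod (p ^ 0)) := by rw [pow_zero]; infer_instance
    exact ⟨1, 1, Subsingleton.elim _ _, Subsingleton.elim _ _,
      Or.inr (Subsingleton.elim _ _)⟩
  set R := ZMod (p ^ ℓ) with hR
  obtain ⟨a, b, c, d, hg⟩ : ∃ a b c d, g.val = !![a, b; c, d] :=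
    ⟨_, _, _, _, (Matrix.etaExpand_eq g.val).symm⟩
  have hdet : IsUnit (a * d - b * c) := by
    have := (Matrix.isUnit_iff_isUnit_det g.val).mp g.isUnit
    rwa [hg, Matrix.det_fin_two_of] at this
  by_cases hcu : IsUnit c
  · -- c unit: big cell, use w
    obtain ⟨ci, h1, h2⟩ : ∃ ci, ci * c = 1 ∧ c * ci = 1 :=
      ⟨↑hcu.unit⁻¹, hcu.val_inv_mul, hcu.mul_val_inv⟩
    have he : IsUnit (b - a * ci * d) := by
      have heq : b - a * ci * d = (-ci) * (a * d - b * c) := by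
        linear_combination (-b) * h1
      rw [heq]
      exact ((IsUnit.of_mul_eq_one (a := ci) c h1).neg).mul hdet
    have hb1 : IsUnit (!![b - a * ci * d, a * ci; 0, 1] : Matrix (Fin 2) (Fin 2) R) := by
      rw [Matrix.isUnit_iff_isUnit_det, Matrix.det_fin_two]
      simpa using he
    have hb2 : IsUnit (!![c, d; 0, 1] : Matrix (Fin 2) (Fin 2) R) := by
      rw [Matrix.isUnit_iff_isUnit_det, Matrix.det_fin_two]
      simpa using hcu
    refine ⟨hb1.unit, hb2.unit, ?_, ?_, Or.inr ?_⟩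
    · rw [IsUnit.unit_spec]; simp
    · rw [IsUnit.unit_spec]; simp
    · rw [IsUnit.unit_spec, IsUnit.unit_spec, hg]
      ext i j
      fin_cases i <;> fin_cases j <;>
        simp [Matrix.mul_apply, Fin.sum_univ_two] <;>
        first
          | ring1
          | linear_combination a * h1
          | linear_combination (-a) * h1
          | linear_combination (a + a * d) * h1
          | linear_combination (-(a + a * d)) * h1
          | linear_combination a * d * h1
          | linear_combination (-(a * d)) * h1
  · -- c nonunit
    have hau : IsUnit a := by
      by_contra hna
      have hpa := stmt8_dvd_of_not_isUnit p ℓ hp hℓ a hna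
      have hpc := stmt8_dvd_of_not_isUnit p ℓ hp hℓ c hcu
      have hpd : (p : R) ∣ a * d - b * c := by
        exact dvd_sub (hpa.mul_right d) (hpc.mul_left b)
      have hpu : IsUnit (p : R) := isUnit_of_dvd_unit hpd hdet
      haveI : NeZero (p ^ ℓ) := ⟨pow_ne_zero ℓ hp.pos.ne'⟩
      have : (p : ℕ).Coprime (p ^ ℓ) := by
        have := (ZMod.isUnit_iff_coprime p (p ^ ℓ)).mp hpu
        simpa using this
      have h3 : p ∣ 1 := this ▸ Nat.dvd_gcd dvd_rfl (dvd_pow_self p hℓ.ne')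
      have := Nat.le_of_dvd one_pos h3
      have := hp.two_le
      omega
    obtain ⟨ai, h1, h2⟩ : ∃ ai, ai * a = 1 ∧ a * ai = 1 :=
      ⟨↑hau.unit⁻¹, hau.val_inv_mul, hau.mul_val_inv⟩
    obtain ⟨z0, hz0⟩ := stmt8_dvd_of_not_isUnit p ℓ hp hℓ c hcu
    have hb2 : IsUnit (!![a, b; 0, d - c * ai * b] : Matrix (Fin 2) (Fin 2) R) := by
      rw [Matrix.isUnit_iff_isUnit_det, Matrix.det_fin_two_of]
      have heq : a * (d - c * ai * b) - b * 0 = a * d - b * c := by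
        linear_combination -c * b * h2
      rw [heq]; exact hdet
    refine ⟨1, hb2.unit, ?_, ?_, Or.inl ⟨1, z0 * ai, le_refl 1, hℓ, ?_⟩⟩
    · simp
    · rw [IsUnit.unit_spec]; simp
    · rw [IsUnit.unit_spec, hg]
      ext i j
      fin_cases i <;> fin_cases j <;>
        simp [Matrix.mul_apply, Fin.sum_univ_two, hz0] <;>
        first
          | ring1
          | linear_combination ((p : R) * z0 * b) * h1
          | linear_combination (-((p : R) * z0 * b)) * h1
          | linear_combination ((p : R) * z0) * h1
          | linear_combination (-((p : R) * z0)) * h1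
end

section
/- Let R = ZMod(p^ℓ), p prime, and let Z U denote the subgroup of GL₂(R) of matrices of the form [[a, x], [0, a]] with a a unit, and let B be the upper triangular invertible matrices. For g = [[1,0],[p^j·z,1]] with z a unit and 0 ≤ j, the intersection g(ZU)g⁻¹ ∩ B equals the set of matrices a·I + [[−p^j·x·z, x],[0, p^j·x·z]] where a is a unit and x ∈ R satisfies p^{max(ℓ−2j,0)} divides x. For g = [[0,1],[1,0]], the intersection g(ZU)g⁻¹ ∩ B is exactly the center Z (invertible scalar matrices). -/
open Matrix

private lemma pow_mul_eq_zero_iff' {p : ℕ} (hp : p.Prime) (ℓ a : ℕ) (x : ZMod (p ^ ℓ)) :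
    (p : ZMod (p ^ ℓ)) ^ a * x = 0 ↔ (p : ZMod (p ^ ℓ)) ^ (ℓ - a) ∣ x := by
  haveI : NeZero (p ^ ℓ) := ⟨pow_ne_zero _ hp.pos.ne'⟩
  constructor
  · intro h
    rcases le_or_gt ℓ a with hle | hlt
    · simp [Nat.sub_eq_zero_of_le hle]
    · have hx : ((p ^ a * x.val : ℕ) : ZMod (p ^ ℓ)) = 0 := by
        push_cast
        rw [ZMod.natCast_zmod_val]
        exact h
      have h2 : p ^ ℓ ∣ p ^ a * x.val := (ZMod.natCast_eq_zero_iff _ _).mp hx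
      have h3 : p ^ a * p ^ (ℓ - a) ∣ p ^ a * x.val := by
        rwa [← pow_add, Nat.add_sub_cancel' hlt.le]
      have h4 : p ^ (ℓ - a) ∣ x.val :=
        (Nat.mul_dvd_mul_iff_left (pow_pos hp.pos a)).mp h3
      obtain ⟨k, hk⟩ := h4
      exact ⟨(k : ZMod (p ^ ℓ)), by rw [← ZMod.natCast_zmod_val x, hk]; push_cast; ring⟩
  · rintro ⟨k, rfl⟩
    have hℓ : (p : ZMod (p ^ ℓ)) ^ ℓ = 0 := by
      rw [← Nat.cast_pow]; exact ZMod.natCast_self _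
    have hle : ℓ ≤ a + (ℓ - a) := by omega
    obtain ⟨d, hd⟩ := Nat.exists_eq_add_of_le hle
    rw [← mul_assoc, ← pow_add, hd, pow_add, hℓ, zero_mul, zero_mul]

/-- In `R = ZMod (p^ℓ)` with `ZU = {[[a,u],[0,a]] : a unit}` and `B` the Borel of
upper triangular matrices with unit diagonal: for `g = [[1,0],[p^j·z,1]]` with `z`
a unit, `g(ZU)g⁻¹ ∩ B` consists of the matrices `a•I + [[−p^j x z, x],[0, p^j x z]]`
with `a` a unit and `p^{max(ℓ−2j,0)} ∣ x`; and for `g = [[0,1],[1,0]]`,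
`g(ZU)g⁻¹ ∩ B` is exactly the set of invertible scalar matrices. -/
theorem stmt_9 (p ℓ j : ℕ) (hp : p.Prime) (z : ZMod (p ^ ℓ)) (hz : IsUnit z) :
    ((fun m : Matrix (Fin 2) (Fin 2) (ZMod (p ^ ℓ)) =>
        !![1, 0; (p : ZMod (p ^ ℓ)) ^ j * z, 1] * m *
          !![1, 0; -((p : ZMod (p ^ ℓ)) ^ j * z), 1]) ''
        {m | ∃ a u : ZMod (p ^ ℓ), IsUnit a ∧ m = !![a, u; 0, a]}
      ∩ {m | IsUnit (m 0 0) ∧ IsUnit (m 1 1) ∧ m 1 0 = 0}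
      = {m | ∃ a x : ZMod (p ^ ℓ), IsUnit a ∧
          ((p : ZMod (p ^ ℓ)) ^ (max (ℓ - 2 * j) 0) ∣ x) ∧
          m = a • (1 : Matrix (Fin 2) (Fin 2) (ZMod (p ^ ℓ)))
            + !![-((p : ZMod (p ^ ℓ)) ^ j * x * z), x;
                 0, (p : ZMod (p ^ ℓ)) ^ j * x * z]})
    ∧
    ((fun m : Matrix (Fin 2) (Fin 2) (ZMod (p ^ ℓ)) =>
        !![0, 1; 1, 0] * m * !![(0 : ZMod (p ^ ℓ)), 1; 1, 0]) ''
        {m | ∃ a u : ZMod (p ^ ℓ), IsUnit a ∧ m = !![a, u; 0, a]}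
      ∩ {m | IsUnit (m 0 0) ∧ IsUnit (m 1 1) ∧ m 1 0 = 0}
      = {m | ∃ a : ZMod (p ^ ℓ), IsUnit a ∧
          m = a • (1 : Matrix (Fin 2) (Fin 2) (ZMod (p ^ ℓ)))}) := by
  have key : ∀ x : ZMod (p ^ ℓ),
      (p : ZMod (p ^ ℓ)) ^ (2 * j) * x = 0 ↔
        (p : ZMod (p ^ ℓ)) ^ (max (ℓ - 2 * j) 0) ∣ x := by
    intro x
    rw [Nat.max_eq_left (Nat.zero_le _)]
    exact pow_mul_eq_zero_iff' hp ℓ (2 * j) x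
  obtain ⟨t, ht⟩ := hz.exists_right_inv
  have hconj : ∀ a u : ZMod (p ^ ℓ),
      !![1, 0; (p : ZMod (p ^ ℓ)) ^ j * z, 1] * !![a, u; 0, a] *
          !![1, 0; -((p : ZMod (p ^ ℓ)) ^ j * z), 1]
        = !![a - (p : ZMod (p ^ ℓ)) ^ j * u * z, u;
             -((p : ZMod (p ^ ℓ)) ^ (2 * j) * u * z * z),
             a + (p : ZMod (p ^ ℓ)) ^ j * u * z] := by
    intro a u
    ext i k
    fin_cases i <;> fin_cases k <;>
      simp [Matrix.mul_apply, Fin.sum_univ_two, two_mul, pow_add] <;> ring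
  have hsum : ∀ a x : ZMod (p ^ ℓ),
      a • (1 : Matrix (Fin 2) (Fin 2) (ZMod (p ^ ℓ)))
          + !![-((p : ZMod (p ^ ℓ)) ^ j * x * z), x;
               0, (p : ZMod (p ^ ℓ)) ^ j * x * z]
        = !![a - (p : ZMod (p ^ ℓ)) ^ j * x * z, x;
             0, a + (p : ZMod (p ^ ℓ)) ^ j * x * z] := by
    intro a x
    ext i k
    fin_cases i <;> fin_cases k <;> (simp [Matrix.one_apply]; try ring)
  constructor
  · ext m
    simp only [Set.mem_inter_iff, Set.mem_image, Set.mem_setOf_eq]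
    constructor
    · rintro ⟨⟨m₀, ⟨a, u, ha, rfl⟩, rfl⟩, h00, h11, h10⟩
      have h10' : (p : ZMod (p ^ ℓ)) ^ (2 * j) * u * z * z = 0 := by
        have := h10
        rw [hconj] at this
        simpa using this
      have hpu : (p : ZMod (p ^ ℓ)) ^ (2 * j) * u = 0 := by
        linear_combination (t * t) * h10' -
          ((p : ZMod (p ^ ℓ)) ^ (2 * j) * u * (1 + z * t)) * ht
      refine ⟨a, u, ha, (key u).mp hpu, ?_⟩
      rw [hconj, hsum, h10', neg_zero]
    · rintro ⟨a, x, ha, hdvd, rfl⟩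
      have hpx : (p : ZMod (p ^ ℓ)) ^ (2 * j) * x = 0 := (key x).mpr hdvd
      have hccx : (p : ZMod (p ^ ℓ)) ^ (2 * j) * x * z * z = 0 := by
        linear_combination (z * z) * hpx
      have hnil : IsNilpotent ((p : ZMod (p ^ ℓ)) ^ j * x * z) :=
        ⟨2, by linear_combination x * hccx⟩
      have h1 : IsUnit (a - (p : ZMod (p ^ ℓ)) ^ j * x * z) := by
        rw [sub_eq_add_neg]
        exact hnil.neg.isUnit_add_left_of_commute ha (Commute.all _ _)
      have h2 : IsUnit (a + (p : ZMod (p ^ ℓ)) ^ j * x * z) :=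
        hnil.isUnit_add_left_of_commute ha (Commute.all _ _)
      refine ⟨⟨!![a, x; 0, a], ⟨a, x, ha, rfl⟩, ?_⟩, ?_, ?_, ?_⟩
      · rw [hconj, hsum, hccx, neg_zero]
      · rw [hsum]; simpa using h1
      · rw [hsum]; simpa using h2
      · rw [hsum]; simp
  · ext m
    simp only [Set.mem_inter_iff, Set.mem_image, Set.mem_setOf_eq]
    have hconj2 : ∀ a u : ZMod (p ^ ℓ),
        !![0, 1; 1, 0] * !![a, u; 0, a] * !![(0 : ZMod (p ^ ℓ)), 1; 1, 0]
          = !![a, 0; u, a] := by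
      intro a u
      ext i k
      fin_cases i <;> fin_cases k <;>
        simp [Matrix.mul_apply, Fin.sum_univ_two]
    constructor
    · rintro ⟨⟨m₀, ⟨a, u, ha, rfl⟩, rfl⟩, h00, h11, h10⟩
      have hu : u = 0 := by
        have := h10
        rw [hconj2] at this
        simpa using this
      refine ⟨a, ha, ?_⟩
      rw [hconj2, hu]
      ext i k
      fin_cases i <;> fin_cases k <;> simp [Matrix.one_apply]
    · rintro ⟨a, ha, rfl⟩
      refine ⟨⟨!![a, 0; 0, a], ⟨a, 0, ha, rfl⟩, ?_⟩, ?_, ?_, ?_⟩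
      · rw [hconj2]
        ext i k
        fin_cases i <;> fin_cases k <;> simp [Matrix.one_apply]
      · simpa using ha
      · simpa using ha
      · simp
end

section
/- Let q be an odd prime power, G = GL₂(F_q), Z its center and U the upper unitriangular subgroup. Fix a nontrivial additive character ψ of F_q and a character χ of Z, and let (χ ⊗ ψ) be the character of ZU sending z·u to χ(z)ψ(u₁₂). Then for any irreducible representation ρ of G induced from the Borel by a pair of distinct characters (χ₁, χ₂) of F_qˣ with χ₁χ₂ restricting to χ on Z, the multiplicity of ρ in Ind_{ZU}^G(χ ⊗ ψ) equals 1; i.e., the Gelfand–Graev representation Ind_{ZU}^G(χ ⊗ ψ) is multiplicity-free. -/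
open Matrix

variable {G : Type*} [Group G]

/-- A representation is irreducible if it is nonzero and its only invariant
subspaces are `⊥` and `⊤`. -/
def IsIrrep {V : Type*} [AddCommGroup V] [Module ℂ V] (ρ : Representation ℂ G V) : Prop :=
  Nontrivial V ∧
    ∀ W : Submodule ℂ V, (∀ g : G, ∀ v ∈ W, ρ g v ∈ W) → W = ⊥ ∨ W = ⊤

/-- The space of `G`-equivariant linear maps between two representations. -/
def equivHoms {V W : Type*} [AddCommGroup V] [Module ℂ V] [AddCommGroup W] [Module ℂ W]
    (ρ : Representation ℂ G V) (σ : Representation ℂ G W) :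
    Submodule ℂ (V →ₗ[ℂ] W) where
  carrier := {f | ∀ (g : G) (v : V), f (ρ g v) = σ g (f v)}
  add_mem' := by
    intro f h hf hh g v
    simp [hf g v, hh g v]
  zero_mem' := by intro g v; simp
  smul_mem' := by
    intro c f hf g v
    simp [hf g v]

/-- The carrier of the representation of `G` induced from a representation `θ` of a
subgroup `H`: functions `f : G → V` with `f (b·g) = θ b (f g)`. -/
def indCarrier (H : Subgroup G) {V : Type*} [AddCommGroup V] [Module ℂ V]
    (θ : Representation ℂ H V) : Submodule ℂ (G → V) where
  carrier := {f | ∀ (b : H) (g : G), f (↑b * g) = θ b (f g)}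
  add_mem' := by
    intro f h hf hh b g
    simp [hf b g, hh b g]
  zero_mem' := by intro b g; simp
  smul_mem' := by
    intro c f hf b g
    simp [hf b g]

/-- The representation of `G` induced from a representation `θ` of a subgroup `H`,
acting by right translation. -/
def indRep (H : Subgroup G) {V : Type*} [AddCommGroup V] [Module ℂ V]
    (θ : Representation ℂ H V) : Representation ℂ G (indCarrier H θ) where
  toFun g :=
    { toFun := fun f => ⟨fun x => (f : G → V) (x * g), by
        intro b x
        have h := f.2 b (x * g)
        simpa [mul_assoc] using h⟩
      map_add' := by intro f h; rfl
      map_smul' := by intro c f; rfl }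
  map_one' := by
    apply LinearMap.ext
    intro f
    apply Subtype.ext
    funext x
    simp
  map_mul' := by
    intro g₁ g₂
    apply LinearMap.ext
    intro f
    apply Subtype.ext
    funext x
    simp [mul_assoc]

/-- The Borel subgroup of upper triangular matrices in `GL₂(R)`. -/
def borelGL2 (R : Type*) [CommRing R] : Subgroup (GL (Fin 2) R) where
  carrier := {g | g.val 1 0 = 0}
  one_mem' := by
    simp [Units.val_one, Matrix.one_apply]
  mul_mem' := by
    intro a b ha hb
    simp only [Set.mem_setOf_eq, Units.val_mul, Matrix.mul_apply, Fin.sum_univ_two] at *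
    simp [ha, hb]
  inv_mem' := by
    intro g hg
    simp only [Set.mem_setOf_eq] at *
    have h : (g⁻¹).val = (g.val)⁻¹ := by
      simp [Matrix.coe_units_inv]
    rw [h, Matrix.inv_def, Matrix.adjugate_fin_two]
    simp [hg]

/-- The subgroup `ZU` of `GL₂(F)` of matrices `[[a, u], [0, a]]` with `a` a unit. -/
def zuGL2 (F : Type*) [Field F] [DecidableEq F] : Subgroup (GL (Fin 2) F) where
  carrier := {g | g.val 1 0 = 0 ∧ g.val 0 0 = g.val 1 1}
  one_mem' := by
    constructor <;> simp [Units.val_one, Matrix.one_apply]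
  mul_mem' := by
    intro a b ha hb
    simp only [Set.mem_setOf_eq, Units.val_mul, Matrix.mul_apply, Fin.sum_univ_two] at *
    constructor
    · simp [ha.1, hb.1]
    · simp [ha.1, hb.1, ha.2, hb.2]
  inv_mem' := by
    intro g hg
    simp only [Set.mem_setOf_eq] at *
    have h : (g⁻¹).val = (g.val)⁻¹ := by
      simp [Matrix.coe_units_inv]
    rw [h, Matrix.inv_def, Matrix.adjugate_fin_two]
    constructor
    · simp [hg.1]
    · simp [hg.2]

set_option linter.unusedSectionVars false
set_option linter.unnecessarySeqFocus false
set_option maxHeartbeats 1000000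
set_option synthInstance.maxHeartbeats 1000000

namespace GG
variable {F : Type*} [Field F] [Fintype F] [DecidableEq F]

lemma mem_borel_iff (g : GL (Fin 2) F) : g ∈ borelGL2 F ↔ g.val 1 0 = 0 := Iff.rfl

lemma mem_zu_iff (g : GL (Fin 2) F) :
    g ∈ zuGL2 F ↔ g.val 1 0 = 0 ∧ g.val 0 0 = g.val 1 1 := Iff.rfl

def wu (t : F) : GL (Fin 2) F where
  val := !![0,1;1,t]
  inv := !![-t,1;1,0]
  val_inv := by ext i j; fin_cases i <;> fin_cases j <;> simp [Matrix.mul_apply, Fin.sum_univ_two]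
  inv_val := by ext i j; fin_cases i <;> fin_cases j <;> simp [Matrix.mul_apply, Fin.sum_univ_two]

def uu (t : F) : GL (Fin 2) F where
  val := !![1,t;0,1]
  inv := !![1,-t;0,1]
  val_inv := by ext i j; fin_cases i <;> fin_cases j <;> simp [Matrix.mul_apply, Fin.sum_univ_two]
  inv_val := by ext i j; fin_cases i <;> fin_cases j <;> simp [Matrix.mul_apply, Fin.sum_univ_two]

def sc (a : F) (ha : a ≠ 0) : GL (Fin 2) F where
  val := !![a,0;0,a]
  inv := !![a⁻¹,0;0,a⁻¹]
  val_inv := by ext i j; fin_cases i <;> fin_cases j <;>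
    simp [Matrix.mul_apply, Fin.sum_univ_two, mul_inv_cancel₀ ha]
  inv_val := by ext i j; fin_cases i <;> fin_cases j <;>
    simp [Matrix.mul_apply, Fin.sum_univ_two, inv_mul_cancel₀ ha]

lemma wu_inv_val (t : F) : ((wu t)⁻¹).val = !![-t,1;1,0] := rfl

lemma wu_mul_uu (a s : F) : wu a * uu s = wu (a + s) := by
  ext i j
  fin_cases i <;> fin_cases j <;>
    simp [wu, uu, Units.val_mul, Matrix.mul_apply, Fin.sum_univ_two, add_comm]

lemma uu_mul_wu_inv (s t : F) : uu s * (wu t)⁻¹ = (wu (t - s))⁻¹ := by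
  have h : wu (t - s) * uu s = wu t := by rw [wu_mul_uu]; ring_nf
  rw [← h, _root_.mul_inv_rev, mul_inv_cancel_left]

lemma uu_mem_borel (s : F) : uu s ∈ borelGL2 F := by
  rw [mem_borel_iff]; simp [uu]

lemma uu_mem_zu (s : F) : uu s ∈ zuGL2 F := by
  rw [mem_zu_iff]; constructor <;> simp [uu]

lemma sc_mem_borel (a : F) (ha : a ≠ 0) : sc a ha ∈ borelGL2 F := by
  rw [mem_borel_iff]; simp [sc]

lemma gl_det_isUnit (g : GL (Fin 2) F) : IsUnit (g.val.det) :=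
  (Matrix.isUnit_iff_isUnit_det _).mp ⟨g, rfl⟩

lemma borel_det (b : ↥(borelGL2 F)) : IsUnit (b.val.val 0 0 * b.val.val 1 1) := by
  have h := gl_det_isUnit b.val
  rwa [Matrix.det_fin_two, b.2, mul_zero, sub_zero] at h

lemma borel00 (b : ↥(borelGL2 F)) : IsUnit (b.val.val 0 0) :=
  isUnit_of_mul_isUnit_left (borel_det b)

lemma borel11 (b : ↥(borelGL2 F)) : IsUnit (b.val.val 1 1) :=
  isUnit_of_mul_isUnit_right (borel_det b)

lemma borel11_ne (b : ↥(borelGL2 F)) : b.val.val 1 1 ≠ 0 := (borel11 b).ne_zero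

lemma borel_x11_ne (x : GL (Fin 2) F) (h : x.val 1 0 = 0) : x.val 1 1 ≠ 0 :=
  borel11_ne ⟨x, (mem_borel_iff x).mpr h⟩

lemma zu00 (z : ↥(zuGL2 F)) : IsUnit (z.val.val 0 0) := by
  have h := gl_det_isUnit z.val
  rw [Matrix.det_fin_two, z.2.1, mul_zero, sub_zero, ← z.2.2] at h
  exact isUnit_of_mul_isUnit_left h

lemma zu00_ne (z : ↥(zuGL2 F)) : z.val.val 0 0 ≠ 0 := (zu00 z).ne_zero

lemma wu_mul_zu (z : ↥(zuGL2 F)) (t : F) :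
    wu t * z.val = sc (z.val.val 0 0) (zu00_ne z) *
      wu (t + z.val.val 0 1 * (z.val.val 0 0)⁻¹) := by
  have h10 : z.val.val 1 0 = 0 := z.2.1
  have h11 : z.val.val 1 1 = z.val.val 0 0 := z.2.2.symm
  have ha := zu00_ne z
  ext i j
  fin_cases i <;> fin_cases j <;>
    simp [wu, sc, Units.val_mul, Matrix.mul_apply, Fin.sum_univ_two, h10, h11] <;>
    field_simp <;> ring

section Reps

variable (θ : Representation ℂ (borelGL2 F) ℂ) (η : Representation ℂ (zuGL2 F) ℂ)
variable {χ₁ χ₂ χ : Fˣ →* ℂˣ} {ψ : AddChar F ℂ}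

def thS (b : ↥(borelGL2 F)) : ℂ := θ b 1

def etS (z : ↥(zuGL2 F)) : ℂ := η z 1

variable {θ} {η}

lemma theta_apply
    (hθ : ∀ (b : borelGL2 F) (h0 : IsUnit (b.val.val 0 0)) (h1 : IsUnit (b.val.val 1 1)),
        θ b = ((χ₁ h0.unit : ℂˣ) * (χ₂ h1.unit : ℂˣ) : ℂˣ).val • (LinearMap.id : ℂ →ₗ[ℂ] ℂ))
    (b : ↥(borelGL2 F)) (c : ℂ) : θ b c = thS θ b * c := by
  rw [thS, hθ b (borel00 b) (borel11 b)]
  simp [smul_eq_mul, mul_assoc]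

lemma eta_apply
    (hη : ∀ (g : zuGL2 F) (h0 : IsUnit (g.val.val 0 0)),
        η g = ((χ h0.unit : ℂˣ).val * ψ (g.val.val 0 1 * (g.val.val 0 0)⁻¹))
          • (LinearMap.id : ℂ →ₗ[ℂ] ℂ))
    (z : ↥(zuGL2 F)) (c : ℂ) : η z c = etS η z * c := by
  rw [etS, hη z (zu00 z)]
  simp [smul_eq_mul, mul_assoc]

variable (hθ : ∀ (b : borelGL2 F) (h0 : IsUnit (b.val.val 0 0)) (h1 : IsUnit (b.val.val 1 1)),
    θ b = ((χ₁ h0.unit : ℂˣ) * (χ₂ h1.unit : ℂˣ) : ℂˣ).val • (LinearMap.id : ℂ →ₗ[ℂ] ℂ))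
variable (hη : ∀ (g : zuGL2 F) (h0 : IsUnit (g.val.val 0 0)),
    η g = ((χ h0.unit : ℂˣ).val * ψ (g.val.val 0 1 * (g.val.val 0 0)⁻¹))
      • (LinearMap.id : ℂ →ₗ[ℂ] ℂ))

include hθ in
lemma thS_mul (b₁ b₂ : ↥(borelGL2 F)) : thS θ (b₁ * b₂) = thS θ b₁ * thS θ b₂ := by
  rw [thS, _root_.map_mul, Module.End.mul_apply, theta_apply hθ]
  rfl

lemma thS_one : thS θ (1 : ↥(borelGL2 F)) = 1 := by
  have h : θ 1 = 1 := map_one θ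
  rw [thS, h]
  rfl

include hθ in
lemma thS_uu (s : F) : thS θ ⟨uu s, uu_mem_borel s⟩ = 1 := by
  set b : ↥(borelGL2 F) := ⟨uu s, uu_mem_borel s⟩
  have h0 : IsUnit (b.val.val 0 0) := borel00 b
  have h1 : IsUnit (b.val.val 1 1) := borel11 b
  have e0 : h0.unit = 1 := Units.ext (by rw [IsUnit.unit_spec]; simp [b, uu])
  have e1 : h1.unit = 1 := Units.ext (by rw [IsUnit.unit_spec]; simp [b, uu])
  rw [thS, hθ b h0 h1]
  simp only [e0, e1]
  simp [Units.val_mul]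

include hη in
lemma etS_uu (s : F) : etS η ⟨uu s, uu_mem_zu s⟩ = ψ s := by
  set z : ↥(zuGL2 F) := ⟨uu s, uu_mem_zu s⟩
  have h0 : IsUnit (z.val.val 0 0) := zu00 z
  have e0 : h0.unit = 1 := Units.ext (by rw [IsUnit.unit_spec]; simp [z, uu])
  have ea : z.val.val 0 0 = 1 := by simp [z, uu]
  have eb : z.val.val 0 1 = s := by simp [z, uu]
  rw [etS, hη z h0]
  simp only [e0]
  simp [uu, ea, eb]

include hθ in
lemma thS_sc (a : F) (ha : a ≠ 0) : thS θ ⟨sc a ha, sc_mem_borel a ha⟩ =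
    ((χ₁ (Units.mk0 a ha) : ℂˣ) : ℂ) * ((χ₂ (Units.mk0 a ha) : ℂˣ) : ℂ) := by
  set b : ↥(borelGL2 F) := ⟨sc a ha, sc_mem_borel a ha⟩
  have h0 : IsUnit (b.val.val 0 0) := borel00 b
  have h1 : IsUnit (b.val.val 1 1) := borel11 b
  have e0 : h0.unit = Units.mk0 a ha := Units.ext (by rw [IsUnit.unit_spec]; simp [b, sc])
  have e1 : h1.unit = Units.mk0 a ha := Units.ext (by rw [IsUnit.unit_spec]; simp [b, sc])
  rw [thS, hθ b h0 h1]
  simp only [e0, e1]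
  simp [Units.val_mul]

include hη in
lemma etS_eq (z : ↥(zuGL2 F)) : etS η z =
    ((χ (Units.mk0 (z.val.val 0 0) (zu00_ne z)) : ℂˣ) : ℂ) *
      ψ (z.val.val 0 1 * (z.val.val 0 0)⁻¹) := by
  have h0 : IsUnit (z.val.val 0 0) := zu00 z
  have e0 : h0.unit = Units.mk0 (z.val.val 0 0) (zu00_ne z) :=
    Units.ext (by rw [IsUnit.unit_spec]; rfl)
  rw [etS, hη z h0]
  simp only [e0]
  simp

include hθ hη in
lemma etS_thS (hcen : χ₁ * χ₂ = χ) (z : ↥(zuGL2 F)) :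
    etS η z = thS θ ⟨sc (z.val.val 0 0) (zu00_ne z), sc_mem_borel _ (zu00_ne z)⟩ *
      ψ (z.val.val 0 1 * (z.val.val 0 0)⁻¹) := by
  rw [etS_eq hη, thS_sc hθ, ← hcen]
  simp


variable (θ) in
def fN : GL (Fin 2) F → ℂ := fun x =>
  if h : x.val 1 0 = 0 then thS θ ⟨x, (mem_borel_iff x).mpr h⟩ else 0

lemma fS_mem_aux (t : F) (x : GL (Fin 2) F) (h : x.val 1 1 = t * x.val 1 0) :
    x * (wu t)⁻¹ ∈ borelGL2 F := by
  rw [mem_borel_iff, Units.val_mul, wu_inv_val]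
  simp [Matrix.mul_apply, Fin.sum_univ_two, h]
  ring

variable (θ) in
def fS (t : F) : GL (Fin 2) F → ℂ := fun x =>
  if h : x.val 1 1 = t * x.val 1 0 then thS θ ⟨x * (wu t)⁻¹, fS_mem_aux t x h⟩ else 0

lemma mul_entry10 (b : ↥(borelGL2 F)) (x : GL (Fin 2) F) :
    (b.val * x).val 1 0 = b.val.val 1 1 * x.val 1 0 := by
  have hb : b.val.val 1 0 = 0 := b.2
  simp [Units.val_mul, Matrix.mul_apply, Fin.sum_univ_two, hb]

lemma mul_entry11 (b : ↥(borelGL2 F)) (x : GL (Fin 2) F) :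
    (b.val * x).val 1 1 = b.val.val 1 1 * x.val 1 1 := by
  have hb : b.val.val 1 0 = 0 := b.2
  simp [Units.val_mul, Matrix.mul_apply, Fin.sum_univ_two, hb]

include hθ in
lemma fN_cov (b : ↥(borelGL2 F)) (x : GL (Fin 2) F) :
    fN θ (b.val * x) = thS θ b * fN θ x := by
  by_cases h : x.val 1 0 = 0
  · have h' : (b.val * x).val 1 0 = 0 := by rw [mul_entry10, h, mul_zero]
    rw [fN, fN, dif_pos h, dif_pos h']
    have e : (⟨b.val * x, (mem_borel_iff _).mpr h'⟩ : ↥(borelGL2 F)) =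
        b * ⟨x, (mem_borel_iff x).mpr h⟩ := Subtype.ext rfl
    rw [e, thS_mul hθ]
  · have h' : (b.val * x).val 1 0 ≠ 0 := by
      rw [mul_entry10]; exact mul_ne_zero (borel11_ne b) h
    rw [fN, fN, dif_neg h, dif_neg h', mul_zero]

include hθ in
lemma fS_cov (t : F) (b : ↥(borelGL2 F)) (x : GL (Fin 2) F) :
    fS θ t (b.val * x) = thS θ b * fS θ t x := by
  by_cases h : x.val 1 1 = t * x.val 1 0
  · have h' : (b.val * x).val 1 1 = t * (b.val * x).val 1 0 := by
      rw [mul_entry10, mul_entry11, h]; ring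
    rw [fS, fS, dif_pos h, dif_pos h']
    have e : (⟨b.val * x * (wu t)⁻¹, fS_mem_aux t _ h'⟩ : ↥(borelGL2 F)) =
        b * ⟨x * (wu t)⁻¹, fS_mem_aux t x h⟩ := Subtype.ext (mul_assoc _ _ _)
    rw [e, thS_mul hθ]
  · have h' : ¬ (b.val * x).val 1 1 = t * (b.val * x).val 1 0 := by
      rw [mul_entry10, mul_entry11]
      intro hc
      exact h (mul_left_cancel₀ (borel11_ne b) (by rw [hc]; ring))
    rw [fS, fS, dif_neg h, dif_neg h', mul_zero]

include hθ in
lemma fN_mem : fN θ ∈ indCarrier (borelGL2 F) θ := by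
  intro b g
  rw [fN_cov hθ, theta_apply hθ]

include hθ in
lemma fS_mem (t : F) : fS θ t ∈ indCarrier (borelGL2 F) θ := by
  intro b g
  rw [fS_cov hθ, theta_apply hθ]

lemma xuu_entry10 (x : GL (Fin 2) F) (s : F) : (x * uu s).val 1 0 = x.val 1 0 := by
  simp [Units.val_mul, uu, Matrix.mul_apply, Fin.sum_univ_two]

lemma xuu_entry11 (x : GL (Fin 2) F) (s : F) :
    (x * uu s).val 1 1 = x.val 1 0 * s + x.val 1 1 := by
  simp [Units.val_mul, uu, Matrix.mul_apply, Fin.sum_univ_two]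

lemma fS_translate (t s : F) (x : GL (Fin 2) F) :
    fS θ t (x * uu s) = fS θ (t - s) x := by
  by_cases h : x.val 1 1 = (t - s) * x.val 1 0
  · have h' : (x * uu s).val 1 1 = t * (x * uu s).val 1 0 := by
      rw [xuu_entry10, xuu_entry11, h]; ring
    rw [fS, fS, dif_pos h, dif_pos h']
    have e : (⟨x * uu s * (wu t)⁻¹, fS_mem_aux t _ h'⟩ : ↥(borelGL2 F)) =
        ⟨x * (wu (t - s))⁻¹, fS_mem_aux (t - s) x h⟩ := by
      apply Subtype.ext
      show x * uu s * (wu t)⁻¹ = x * (wu (t - s))⁻¹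
      rw [mul_assoc, uu_mul_wu_inv]
    rw [e]
  · have h' : ¬ (x * uu s).val 1 1 = t * (x * uu s).val 1 0 := by
      rw [xuu_entry10, xuu_entry11]
      intro hc
      exact h (by linear_combination hc)
    rw [fS, fS, dif_neg h, dif_neg h']

include hθ in
lemma fN_translate (s : F) (x : GL (Fin 2) F) : fN θ (x * uu s) = fN θ x := by
  by_cases h : x.val 1 0 = 0
  · have h' : (x * uu s).val 1 0 = 0 := by rw [xuu_entry10, h]
    rw [fN, fN, dif_pos h, dif_pos h']
    have e : (⟨x * uu s, (mem_borel_iff _).mpr h'⟩ : ↥(borelGL2 F)) =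
        ⟨x, (mem_borel_iff x).mpr h⟩ * ⟨uu s, uu_mem_borel s⟩ := Subtype.ext rfl
    rw [e, thS_mul hθ, thS_uu hθ, mul_one]
  · have h' : (x * uu s).val 1 0 ≠ 0 := by rw [xuu_entry10]; exact h
    rw [fN, fN, dif_neg h, dif_neg h']

include hθ in
lemma decomp (f : ↥(indCarrier (borelGL2 F) θ)) (x : GL (Fin 2) F) :
    f.val x = f.val 1 * fN θ x + ∑ t : F, f.val (wu t) * fS θ t x := by
  by_cases h : x.val 1 0 = 0
  · have hb : x ∈ borelGL2 F := (mem_borel_iff x).mpr h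
    have h1 : f.val x = thS θ ⟨x, hb⟩ * f.val 1 := by
      have h2 := f.2 ⟨x, hb⟩ 1
      rw [mul_one, theta_apply hθ] at h2
      exact h2
    have hsum : ∀ t : F, f.val (wu t) * fS θ t x = 0 := by
      intro t
      have hcond : ¬ x.val 1 1 = t * x.val 1 0 :=
        fun hc => borel_x11_ne x h (by rw [hc, h, mul_zero])
      simp only [fS]
      rw [dif_neg hcond, mul_zero]
    rw [Finset.sum_eq_zero (fun t _ => hsum t), add_zero]
    simp only [fN]
    rw [dif_pos h, h1, mul_comm]
  · set t₀ := x.val 1 1 * (x.val 1 0)⁻¹ with ht0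
    have hcond : x.val 1 1 = t₀ * x.val 1 0 := by
      rw [ht0]
      field_simp
    have hfn : fN θ x = 0 := by simp only [fN]; rw [dif_neg h]
    have hb := fS_mem_aux t₀ x hcond
    have h1 : f.val x = thS θ ⟨x * (wu t₀)⁻¹, hb⟩ * f.val (wu t₀) := by
      have h2 := f.2 ⟨x * (wu t₀)⁻¹, hb⟩ (wu t₀)
      rw [theta_apply hθ] at h2
      have h3 : (↑(⟨x * (wu t₀)⁻¹, hb⟩ : ↥(borelGL2 F)) : GL (Fin 2) F) * wu t₀ = x :=
        inv_mul_cancel_right x (wu t₀)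
      rw [h3] at h2
      exact h2
    rw [hfn, mul_zero, zero_add, Finset.sum_eq_single t₀]
    · simp only [fS]
      rw [dif_pos hcond, h1, mul_comm]
    · intro t _ hne
      have hcond' : ¬ x.val 1 1 = t * x.val 1 0 := by
        intro hc
        apply hne
        rw [ht0, hc]
        field_simp
      simp only [fS]
      rw [dif_neg hcond', mul_zero]
    · intro hab
      exact absurd (Finset.mem_univ t₀) hab

variable (θ ψ) in
noncomputable def T0fun (f : ↥(indCarrier (borelGL2 F) θ)) : GL (Fin 2) F → ℂ :=
  fun x => ∑ t : F, ψ (-t) * f.val (wu t * x)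

include hθ hη in
lemma T0_memW (hcen : χ₁ * χ₂ = χ) (f : ↥(indCarrier (borelGL2 F) θ)) :
    T0fun θ ψ f ∈ indCarrier (zuGL2 F) η := by
  intro z x
  rw [eta_apply hη]
  have ha := zu00_ne z
  set a := z.val.val 0 0
  set c := z.val.val 0 1 * (z.val.val 0 0)⁻¹ with hc
  set K := thS θ ⟨sc a ha, sc_mem_borel a ha⟩ with hK
  have hz : etS η z = K * ψ c := etS_thS hθ hη hcen z
  have key : ∀ t : F, ψ (-t) * f.val (wu t * (↑z * x)) =
      K * (ψ c * (ψ (-(t + c)) * f.val (wu (t + c) * x))) := by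
    intro t
    have e : wu t * (↑z * x) =
        (↑(⟨sc a ha, sc_mem_borel a ha⟩ : ↥(borelGL2 F)) : GL (Fin 2) F) * (wu (t + c) * x) := by
      rw [← mul_assoc]
      rw [show wu t * ↑z = sc a ha * wu (t + c) from wu_mul_zu z t]
      rw [mul_assoc]
    rw [e, f.2 ⟨sc a ha, sc_mem_borel a ha⟩ (wu (t + c) * x), theta_apply hθ]
    rw [show (-t : F) = c + -(t + c) by ring, AddChar.map_add_eq_mul]
    ring
  show (∑ t : F, ψ (-t) * f.val (wu t * (↑z * x))) =
      etS η z * ∑ t : F, ψ (-t) * f.val (wu t * x)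
  rw [hz]
  calc ∑ t : F, ψ (-t) * f.val (wu t * (↑z * x))
      = ∑ t : F, K * (ψ c * (ψ (-(t + c)) * f.val (wu (t + c) * x))) :=
        Finset.sum_congr rfl (fun t _ => key t)
    _ = K * ψ c * ∑ t : F, ψ (-(t + c)) * f.val (wu (t + c) * x) := by
        rw [Finset.mul_sum]
        exact Finset.sum_congr rfl (fun t _ => by ring)
    _ = K * ψ c * ∑ t : F, ψ (-t) * f.val (wu t * x) := by
        congr 1
        exact Fintype.sum_equiv (Equiv.addRight c) _ _ (fun t => rfl)

variable (θ η ψ) in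
noncomputable def T0 (hmem : ∀ f, T0fun θ ψ f ∈ indCarrier (zuGL2 F) η) :
    ↥(indCarrier (borelGL2 F) θ) →ₗ[ℂ] ↥(indCarrier (zuGL2 F) η) where
  toFun f := ⟨T0fun θ ψ f, hmem f⟩
  map_add' f g := by
    apply Subtype.ext
    funext x
    show T0fun θ ψ (f + g) x = T0fun θ ψ f x + T0fun θ ψ g x
    simp only [T0fun]
    rw [← Finset.sum_add_distrib]
    apply Finset.sum_congr rfl
    intro t _
    have e : (↑(f + g) : GL (Fin 2) F → ℂ) (wu t * x) =
        f.val (wu t * x) + g.val (wu t * x) := rfl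
    rw [e]
    ring
  map_smul' c f := by
    apply Subtype.ext
    funext x
    show T0fun θ ψ (c • f) x = c * T0fun θ ψ f x
    simp only [T0fun]
    rw [Finset.mul_sum]
    apply Finset.sum_congr rfl
    intro t _
    have e : (↑(c • f) : GL (Fin 2) F → ℂ) (wu t * x) = c * f.val (wu t * x) := rfl
    rw [e]
    ring

lemma T0_equiv (hmem : ∀ f, T0fun θ ψ f ∈ indCarrier (zuGL2 F) η) :
    (T0 θ η ψ hmem) ∈ equivHoms (indRep (borelGL2 F) θ) (indRep (zuGL2 F) η) := by
  intro g f
  apply Subtype.ext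
  funext x
  show T0fun θ ψ (indRep (borelGL2 F) θ g f) x = T0fun θ ψ f (x * g)
  simp only [T0fun]
  apply Finset.sum_congr rfl
  intro t _
  have e : (↑(indRep (borelGL2 F) θ g f) : GL (Fin 2) F → ℂ) (wu t * x) =
      f.val ((wu t * x) * g) := rfl
  rw [e, mul_assoc]

include hθ in
lemma T0_val_one (hfs : fS θ 0 ∈ indCarrier (borelGL2 F) θ) :
    T0fun θ ψ (⟨fS θ 0, hfs⟩ : ↥(indCarrier (borelGL2 F) θ)) 1 = 1 := by
  show (∑ t : F, ψ (-t) * fS θ 0 (wu t * 1)) = 1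
  rw [Finset.sum_eq_single 0]
  · rw [mul_one]
    have hcond : (wu (0:F)).val 1 1 = 0 * (wu (0:F)).val 1 0 := by simp [wu]
    have e : (⟨wu (0:F) * (wu (0:F))⁻¹, fS_mem_aux 0 (wu (0:F)) hcond⟩ : ↥(borelGL2 F)) = 1 := by
      apply Subtype.ext
      show wu (0:F) * (wu (0:F))⁻¹ = 1
      simp
    simp only [fS]
    rw [dif_pos hcond, e, thS_one]
    simp
  · intro t _ hne
    have hcond : ¬ (wu t * 1).val 1 1 = 0 * (wu t * 1).val 1 0 := by
      rw [mul_one]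
      simp [wu, hne]
    simp only [fS]
    rw [dif_neg hcond, mul_zero]
  · intro hab
    exact absurd (Finset.mem_univ 0) hab

end Reps
end GG
set_option synthInstance.maxHeartbeats 1000000
set_option maxHeartbeats 1000000
set_option maxSynthPendingDepth 5

/-- The Gelfand–Graev module with fixed central character is multiplicity-free on
principal series: for distinct characters `χ₁ ≠ χ₂` of `F_qˣ` with `χ₁χ₂ = χ` on the
center, and `ψ` a nontrivial additive character, the multiplicity of
`Ind_B^G(χ₁,χ₂)` in `Ind_{ZU}^G(χ ⊗ ψ)` equals `1`. -/
theorem stmt_14 {F : Type*} [Field F] [Fintype F] [DecidableEq F]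
    (hq : Odd (Fintype.card F))
    (χ₁ χ₂ χ : Fˣ →* ℂˣ) (ψ : AddChar F ℂ) (hψ : ψ ≠ 1)
    (h12 : χ₁ ≠ χ₂) (hcen : χ₁ * χ₂ = χ)
    (θ : Representation ℂ (borelGL2 F) ℂ)
    (hθ : ∀ (b : borelGL2 F) (h0 : IsUnit (b.val.val 0 0)) (h1 : IsUnit (b.val.val 1 1)),
        θ b = ((χ₁ h0.unit : ℂˣ) * (χ₂ h1.unit : ℂˣ) : ℂˣ).val • (LinearMap.id : ℂ →ₗ[ℂ] ℂ))
    (η : Representation ℂ (zuGL2 F) ℂ)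
    (hη : ∀ (g : zuGL2 F) (h0 : IsUnit (g.val.val 0 0)),
        η g = ((χ h0.unit : ℂˣ).val * ψ (g.val.val 0 1 * (g.val.val 0 0)⁻¹))
          • (LinearMap.id : ℂ →ₗ[ℂ] ℂ)) :
    Module.finrank ℂ (equivHoms (indRep (borelGL2 F) θ) (indRep (zuGL2 F) η)) = 1 := by
  classical
  obtain ⟨s₀, hs₀⟩ : ∃ s : F, ψ s ≠ 1 := by
    by_contra hc
    push_neg at hc
    exact hψ (by ext a; simpa using hc a)
  have hmem : ∀ f, GG.T0fun θ ψ f ∈ indCarrier (zuGL2 F) η := fun f =>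
    GG.T0_memW hθ hη hcen f
  set T := GG.T0 θ η ψ hmem with hT
  have hTmem : T ∈ equivHoms (indRep (borelGL2 F) θ) (indRep (zuGL2 F) η) :=
    GG.T0_equiv hmem
  have hfs : ∀ t : F, GG.fS θ t ∈ indCarrier (borelGL2 F) θ := fun t => GG.fS_mem hθ t
  have hfn : GG.fN θ ∈ indCarrier (borelGL2 F) θ := GG.fN_mem hθ
  set fSel : F → ↥(indCarrier (borelGL2 F) θ) := fun t => ⟨GG.fS θ t, hfs t⟩ with hfSel
  set fNel : ↥(indCarrier (borelGL2 F) θ) := ⟨GG.fN θ, hfn⟩ with hfNel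
  have hTval : (T (fSel 0)).val 1 = 1 := GG.T0_val_one hθ (hfs 0)
  have hTne : T ≠ 0 := by
    intro h0
    rw [h0] at hTval
    simp at hTval
  have hspan : ∀ S ∈ equivHoms (indRep (borelGL2 F) θ) (indRep (zuGL2 F) η),
      S = ((S (fSel 0)).val 1) • T := by
    intro S hS
    have hS' : ∀ (g : GL (Fin 2) F) (v : ↥(indCarrier (borelGL2 F) θ)),
        S (indRep (borelGL2 F) θ g v) = indRep (zuGL2 F) η g (S v) := hS
    have hval : ∀ (f : ↥(indCarrier (borelGL2 F) θ)) (x : GL (Fin 2) F),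
        (S f).val x = (S (indRep (borelGL2 F) θ x f)).val 1 := by
      intro f x
      calc (S f).val x = (S f).val (1 * x) := by rw [one_mul]
        _ = (indRep (zuGL2 F) η x (S f)).val 1 := rfl
        _ = (S (indRep (borelGL2 F) θ x f)).val 1 := by rw [hS' x f]
    have hrel0 : (S fNel).val 1 = 0 := by
      have e1 : indRep (borelGL2 F) θ (GG.uu s₀) fNel = fNel := by
        apply Subtype.ext
        funext x
        show GG.fN θ (x * GG.uu s₀) = GG.fN θ x
        exact GG.fN_translate hθ s₀ x
      have e2 : (S fNel).val (GG.uu s₀) = (S fNel).val 1 := by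
        rw [hval fNel (GG.uu s₀), e1]
      have e3 : (S fNel).val (GG.uu s₀) = ψ s₀ * (S fNel).val 1 := by
        have h4 := (S fNel).2 ⟨GG.uu s₀, GG.uu_mem_zu s₀⟩ 1
        rw [mul_one] at h4
        rw [h4, GG.eta_apply hη, GG.etS_uu hη]
      have h5 : ψ s₀ * (S fNel).val 1 = (S fNel).val 1 := by rw [← e3, e2]
      have h6 : (ψ s₀ - 1) * (S fNel).val 1 = 0 := by linear_combination h5
      rcases mul_eq_zero.mp h6 with h | h
      · exact absurd (sub_eq_zero.mp h) hs₀
      · exact h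
    have hrelt : ∀ t : F, (S (fSel t)).val 1 = ψ (-t) * (S (fSel 0)).val 1 := by
      intro t
      have e1 : indRep (borelGL2 F) θ (GG.uu t) (fSel t) = fSel 0 := by
        apply Subtype.ext
        funext x
        show GG.fS θ t (x * GG.uu t) = GG.fS θ 0 x
        rw [GG.fS_translate, sub_self]
      have e2 : (S (fSel t)).val (GG.uu t) = (S (fSel 0)).val 1 := by
        rw [hval (fSel t) (GG.uu t), e1]
      have e3 : (S (fSel t)).val (GG.uu t) = ψ t * (S (fSel t)).val 1 := by
        have h4 := (S (fSel t)).2 ⟨GG.uu t, GG.uu_mem_zu t⟩ 1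
        rw [mul_one] at h4
        rw [h4, GG.eta_apply hη, GG.etS_uu hη]
      have hinv : ψ (-t) * ψ t = 1 := by
        rw [← AddChar.map_add_eq_mul]
        simp
      rw [← e2, e3, ← mul_assoc, hinv, one_mul]
    have hmain : ∀ f : ↥(indCarrier (borelGL2 F) θ),
        (S f).val 1 = ((S (fSel 0)).val 1) * ∑ t : F, ψ (-t) * f.val (GG.wu t) := by
      intro f
      have hdec : f = f.val 1 • fNel + ∑ t : F, f.val (GG.wu t) • fSel t := by
        apply Subtype.ext
        funext x
        rw [GG.decomp hθ f x]
        simp [hfNel, hfSel, Finset.sum_apply, smul_eq_mul]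
      conv_lhs => rw [hdec]
      simp only [map_add, _root_.map_smul, map_sum]
      have expand : ((f.val 1 • S fNel + ∑ t : F, f.val (GG.wu t) • S (fSel t)) :
          ↥(indCarrier (zuGL2 F) η)).val 1
          = f.val 1 * (S fNel).val 1 + ∑ t : F, f.val (GG.wu t) * (S (fSel t)).val 1 := by
        simp [Finset.sum_apply, smul_eq_mul]
      rw [expand, hrel0, mul_zero, zero_add, Finset.mul_sum]
      apply Finset.sum_congr rfl
      intro t _
      rw [hrelt t]
      ring
    apply LinearMap.ext
    intro f
    apply Subtype.ext
    funext x
    have h1 : (S f).val x = (S (indRep (borelGL2 F) θ x f)).val 1 := hval f x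
    rw [h1, hmain (indRep (borelGL2 F) θ x f)]
    have h3 : (((((S (fSel 0)).val 1) • T) f) :
        ↥(indCarrier (zuGL2 F) η)).val x = ((S (fSel 0)).val 1) * GG.T0fun θ ψ f x := rfl
    rw [h3]
    congr 1
  have heq : equivHoms (indRep (borelGL2 F) θ) (indRep (zuGL2 F) η) =
      Submodule.span ℂ {T} := by
    apply le_antisymm
    · intro S hS
      rw [Submodule.mem_span_singleton]
      exact ⟨(S (fSel 0)).val 1, (hspan S hS).symm⟩
    · rw [Submodule.span_le, Set.singleton_subset_iff]
      exact hTmem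
  rw [heq]
  exact finrank_span_singleton hTne
end

section
/- Let R = ZMod(p^ℓ) with p an odd prime and ℓ ≥ 2, let t ≤ ℓ − 2, fix λ ∈ R, and consider the set S of matrices [[a, b], [p^{ℓ−t}, λ−a]] over R with λ − 2a ∈ (p) and b a unit. Then any maximal collection of pairwise non-conjugate (under GL₂(R)-conjugation) matrices in S has cardinality at most p^{ℓ−2}. -/
open Matrix

lemma aux_conj {R : Type*} [CommRing R] (a b c lam : R) (hb : IsUnit b) :
    ∃ g : (Matrix (Fin 2) (Fin 2) R)ˣ,
      g.val * !![a, b; c, lam - a] * (g⁻¹).val = !![0, -(a*(lam-a) - b*c); 1, lam] := by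
  set A : Matrix (Fin 2) (Fin 2) R := !![a, b; c, lam - a] with hA
  set P : Matrix (Fin 2) (Fin 2) R := !![0, b; 1, lam - a] with hP
  have hdet : IsUnit P.det := by
    simp [hP, Matrix.det_fin_two_of]
    exact hb
  have hU : IsUnit P := (Matrix.isUnit_iff_isUnit_det P).mpr hdet
  set C : Matrix (Fin 2) (Fin 2) R := !![0, -(a*(lam-a) - b*c); 1, lam] with hC
  have key : A * P = P * C := by
    ext i j
    fin_cases i <;> fin_cases j <;>
      simp [hA, hP, hC, Matrix.mul_apply, Fin.sum_univ_two] <;> ring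
  refine ⟨hU.unit⁻¹, ?_⟩
  have h1 : (hU.unit⁻¹)⁻¹ = hU.unit := inv_inv _
  rw [h1]
  have h2 : (hU.unit : Matrix (Fin 2) (Fin 2) R) = P := hU.unit_spec
  have h3 : ((hU.unit⁻¹ : _) : Matrix (Fin 2) (Fin 2) R) * P = 1 := by
    have := hU.unit.inv_mul
    rw [h2] at this
    exact this
  calc (hU.unit⁻¹ : _).val * A * hU.unit.val
      = (hU.unit⁻¹ : _).val * (A * P) := by rw [h2, mul_assoc]
    _ = (hU.unit⁻¹ : _).val * P * C := by rw [key, mul_assoc]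
    _ = C := by rw [h3, one_mul]

/-- Lemma 3.9: in `R = ZMod (p^ℓ)` (`ℓ ≥ 2`, `t ≤ ℓ − 2`, `λ` fixed), any collection
of pairwise non-conjugate matrices of the form `[[a, b], [p^{ℓ−t}, λ−a]]` with
`λ − 2a ∈ (p)` and `b` a unit has cardinality at most `p^{ℓ−2}`. -/
theorem stmt_16 (p ℓ t : ℕ) (hp : p.Prime) (hodd : Odd p) (hℓ : 2 ≤ ℓ)
    (ht : t ≤ ℓ - 2) (lam : ZMod (p ^ ℓ))
    (M : Finset (Matrix (Fin 2) (Fin 2) (ZMod (p ^ ℓ))))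
    (hS : ∀ A ∈ M, ∃ a b : ZMod (p ^ ℓ), IsUnit b ∧
        (∃ c : ZMod (p ^ ℓ), lam - 2 * a = (p : ZMod (p ^ ℓ)) * c) ∧
        A = !![a, b; (p : ZMod (p ^ ℓ)) ^ (ℓ - t), lam - a])
    (hpair : ∀ A ∈ M, ∀ D ∈ M, A ≠ D →
        ¬ ∃ g : GL (Fin 2) (ZMod (p ^ ℓ)), g.val * A * (g⁻¹).val = D) :
    M.card ≤ p ^ (ℓ - 2) := by
  haveI : NeZero (p ^ ℓ) := ⟨(pow_pos hp.pos ℓ).ne'⟩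
  haveI : NeZero (p ^ (ℓ - 2)) := ⟨(pow_pos hp.pos (ℓ - 2)).ne'⟩
  -- 4 is a unit
  have hp2 : p ≠ 2 := by
    rintro rfl
    rw [Nat.odd_iff] at hodd; omega
  have h4 : IsUnit (4 : ZMod (p ^ ℓ)) := by
    have h4' : ((4 : ℕ) : ZMod (p ^ ℓ)) = (4 : ZMod (p ^ ℓ)) := by norm_num
    rw [← h4', ZMod.isUnit_iff_coprime]
    have hcp : Nat.Coprime 4 p := by
      have hnd : ¬ p ∣ 4 := by
        intro hdvd
        rw [show (4 : ℕ) = 2 ^ 2 by norm_num] at hdvd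
        have h2 : p ∣ 2 := hp.dvd_of_dvd_pow hdvd
        have := Nat.le_of_dvd (by norm_num) h2
        have := hp.two_le
        omega
      exact ((Nat.Prime.coprime_iff_not_dvd hp).mpr hnd).symm
    exact hcp.pow_right ℓ
  set u := (4 : ZMod (p ^ ℓ))⁻¹ with hu_def
  have hu : (4 : ZMod (p ^ ℓ)) * u = 1 := ZMod.mul_inv_of_unit _ h4
  -- every A ∈ M is conjugate to the companion matrix of (λ, det A)
  have hconj : ∀ A ∈ M, ∃ g : GL (Fin 2) (ZMod (p ^ ℓ)),
      g.val * A * (g⁻¹).val = !![0, -A.det; 1, lam] := by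
    intro A hA
    obtain ⟨a, b, hb, _, rfl⟩ := hS A hA
    obtain ⟨g, hg⟩ := aux_conj a b ((p : ZMod (p ^ ℓ)) ^ (ℓ - t)) lam hb
    refine ⟨g, ?_⟩
    rw [Matrix.det_fin_two_of]
    exact hg
  -- det is injective on M
  have hinj : Set.InjOn Matrix.det (M : Set (Matrix (Fin 2) (Fin 2) (ZMod (p ^ ℓ)))) := by
    intro A hA D hD hdet
    by_contra hne
    obtain ⟨gA, hgA⟩ := hconj A (Finset.mem_coe.mp hA)
    obtain ⟨gD, hgD⟩ := hconj D (Finset.mem_coe.mp hD)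
    rw [hdet, ← hgD] at hgA
    refine hpair A (Finset.mem_coe.mp hA) D (Finset.mem_coe.mp hD) hne ⟨gD⁻¹ * gA, ?_⟩
    have e1 : (gD⁻¹).val * gD.val = (1 : Matrix (Fin 2) (Fin 2) (ZMod (p ^ ℓ))) := gD.inv_mul
    rw [_root_.mul_inv_rev, inv_inv, Units.val_mul, Units.val_mul]
    calc (gD⁻¹).val * gA.val * A * ((gA⁻¹).val * gD.val)
        = (gD⁻¹).val * (gA.val * A * (gA⁻¹).val) * gD.val := by
          simp only [mul_assoc]
      _ = (gD⁻¹).val * (gD.val * D * (gD⁻¹).val) * gD.val := by rw [hgA]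
      _ = ((gD⁻¹).val * gD.val) * D * ((gD⁻¹).val * gD.val) := by
          simp only [mul_assoc]
      _ = D := by rw [e1, one_mul, mul_one]
  -- the determinant lies in the coset u·λ² + p²R
  have hmem : ∀ A ∈ M, ∃ w : ZMod (p ^ ℓ),
      A.det = u * lam ^ 2 - (p : ZMod (p ^ ℓ)) ^ 2 * w := by
    intro A hA
    obtain ⟨a, b, hb, ⟨c, hc⟩, rfl⟩ := hS A hA
    have hdetA : (!![a, b; (p : ZMod (p ^ ℓ)) ^ (ℓ - t), lam - a]).det
        = a * (lam - a) - b * (p : ZMod (p ^ ℓ)) ^ (ℓ - t) := Matrix.det_fin_two_of _ _ _ _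
    have hpow : ((p : ZMod (p ^ ℓ))) ^ (ℓ - t)
        = (p : ZMod (p ^ ℓ)) ^ 2 * (p : ZMod (p ^ ℓ)) ^ (ℓ - t - 2) := by
      rw [← pow_add]
      congr 1
      omega
    have key : 4 * (!![a, b; (p : ZMod (p ^ ℓ)) ^ (ℓ - t), lam - a]).det
        = lam ^ 2 - (p : ZMod (p ^ ℓ)) ^ 2
            * (c ^ 2 + 4 * b * (p : ZMod (p ^ ℓ)) ^ (ℓ - t - 2)) := by
      rw [hdetA, hpow]
      linear_combination (-(lam - 2 * a + (p : ZMod (p ^ ℓ)) * c)) * hc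
    refine ⟨u * (c ^ 2 + 4 * b * (p : ZMod (p ^ ℓ)) ^ (ℓ - t - 2)), ?_⟩
    linear_combination u * key
      - (!![a, b; (p : ZMod (p ^ ℓ)) ^ (ℓ - t), lam - a]).det * hu
  -- target finset
  set T : Finset (ZMod (p ^ ℓ)) := Finset.image
    (fun z : ZMod (p ^ (ℓ - 2)) =>
      u * lam ^ 2 - (p : ZMod (p ^ ℓ)) ^ 2 * ((z.val : ℕ) : ZMod (p ^ ℓ)))
    Finset.univ with hT
  have hmaps : ∀ A ∈ M, A.det ∈ T := by
    intro A hA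
    obtain ⟨w, hw⟩ := hmem A hA
    rw [hT, Finset.mem_image]
    refine ⟨((w.val : ℕ) : ZMod (p ^ (ℓ - 2))), Finset.mem_univ _, ?_⟩
    have hzv : ((w.val : ℕ) : ZMod (p ^ (ℓ - 2))).val = w.val % p ^ (ℓ - 2) :=
      ZMod.val_natCast _ _
    have hwR : ((w.val : ℕ) : ZMod (p ^ ℓ)) = w := by
      rw [ZMod.natCast_val, ZMod.cast_id]
    have hpl : (p : ZMod (p ^ ℓ)) ^ 2 * (p : ZMod (p ^ ℓ)) ^ (ℓ - 2) = 0 := by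
      rw [← pow_add]
      have h2ℓ : 2 + (ℓ - 2) = ℓ := by omega
      rw [h2ℓ]
      have h0 : ((p ^ ℓ : ℕ) : ZMod (p ^ ℓ)) = 0 := ZMod.natCast_self _
      push_cast at h0
      exact h0
    have hq := Nat.div_add_mod w.val (p ^ (ℓ - 2))
    have hcast : ((w.val : ℕ) : ZMod (p ^ ℓ))
        = (p : ZMod (p ^ ℓ)) ^ (ℓ - 2) * ((w.val / p ^ (ℓ - 2) : ℕ) : ZMod (p ^ ℓ))
          + ((w.val % p ^ (ℓ - 2) : ℕ) : ZMod (p ^ ℓ)) := by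
      conv_lhs => rw [← hq]
      push_cast
      ring
    have e : (p : ZMod (p ^ ℓ)) ^ 2 * ((w.val % p ^ (ℓ - 2) : ℕ) : ZMod (p ^ ℓ))
        = (p : ZMod (p ^ ℓ)) ^ 2 * w := by
      calc (p : ZMod (p ^ ℓ)) ^ 2 * ((w.val % p ^ (ℓ - 2) : ℕ) : ZMod (p ^ ℓ))
          = (p : ZMod (p ^ ℓ)) ^ 2 * ((w.val : ℕ) : ZMod (p ^ ℓ))
            - ((p : ZMod (p ^ ℓ)) ^ 2 * (p : ZMod (p ^ ℓ)) ^ (ℓ - 2))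
              * ((w.val / p ^ (ℓ - 2) : ℕ) : ZMod (p ^ ℓ)) := by
            rw [hcast]; ring
        _ = (p : ZMod (p ^ ℓ)) ^ 2 * w := by rw [hpl, hwR]; ring
    rw [hzv, e, ← hw]
  calc M.card ≤ T.card := Finset.card_le_card_of_injOn Matrix.det hmaps hinj
    _ ≤ (Finset.univ : Finset (ZMod (p ^ (ℓ - 2)))).card := Finset.card_image_le
    _ = p ^ (ℓ - 2) := by rw [Finset.card_univ, ZMod.card]
end
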